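/- For every odd integer m ≥ 5, the chromatic number of the generalized Grötzsch graph G_m is 4. -/

import Mathlib

open SimpleGraph

/-- Vertex type for the graphs on `2m+1` vertices: `Sum.inl i` is the vertex `pᵢ`,
`Sum.inr (Sum.inl i)` is the vertex `qᵢ` (indices taken modulo `m`),
and `Sum.inr (Sum.inr ())` is the apex vertex `a`. -/
abbrev GVert (m : ℕ) := Sum (ZMod m) (Sum (ZMod m) Unit)

/-- The vertex `pᵢ`. -/
def pV {m : ℕ} (i : ZMod m) : GVert m := Sum.inl i

/-- The vertex `qᵢ`. -/
def qV {m : ℕ} (i : ZMod m) : GVert m := Sum.inr (Sum.inl i)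

/-- The apex vertex `a`. -/
def aV (m : ℕ) : GVert m := Sum.inr (Sum.inr ())

/-- The generalized Grötzsch graph `G_m` (intended for odd `m ≥ 5`): edges are
`a qᵢ` for all `i`, `pᵢ pᵢ₊₁` for all `i`, and `pᵢ q_{i + (2k-1)}` for all `i` and
`0 ≤ k ≤ (m-3)/2`, all indices taken modulo `m`. -/
def GenGrotzsch (m : ℕ) : SimpleGraph (GVert m) :=
  SimpleGraph.fromRel (fun u v =>
    (∃ i : ZMod m, u = aV m ∧ v = qV i) ∨
    (∃ i : ZMod m, u = pV i ∧ v = pV (i + 1)) ∨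
    (∃ (i : ZMod m) (k : ℕ), k ≤ (m - 3) / 2 ∧
      u = pV i ∧ v = qV (i + (2 * (k : ZMod m) - 1))))

section Aux

variable {m : ℕ}

lemma gg_adj_aq (i : ZMod m) : (GenGrotzsch m).Adj (aV m) (qV i) := by
  rw [GenGrotzsch, SimpleGraph.fromRel_adj]
  exact ⟨by simp [aV, qV], Or.inl (Or.inl ⟨i, rfl, rfl⟩)⟩

lemma gg_adj_pq (i : ZMod m) (k : ℕ) (hk : k ≤ (m - 3) / 2) :
    (GenGrotzsch m).Adj (pV i) (qV (i + (2 * (k : ZMod m) - 1))) := by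
  rw [GenGrotzsch, SimpleGraph.fromRel_adj]
  exact ⟨by simp [pV, qV], Or.inl (Or.inr (Or.inr ⟨i, k, hk, rfl, rfl⟩))⟩

lemma gg_adj_pp (h5 : 5 ≤ m) (i : ZMod m) : (GenGrotzsch m).Adj (pV i) (pV (i + 1)) := by
  haveI : Fact (1 < m) := ⟨by omega⟩
  rw [GenGrotzsch, SimpleGraph.fromRel_adj]
  refine ⟨?_, Or.inl (Or.inr (Or.inl ⟨i, rfl, rfl⟩))⟩
  simp only [pV, Sum.inl.injEq, Ne]
  intro h
  exact one_ne_zero (left_eq_add.mp h)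

lemma gg_adj_p1q (h5 : 5 ≤ m) (i : ZMod m) :
    (GenGrotzsch m).Adj (pV (i + 1)) (qV i) := by
  have h := gg_adj_pq (m := m) (i + 1) 0 (Nat.zero_le _)
  have he : (i + 1) + (2 * ((0 : ℕ) : ZMod m) - 1) = i := by push_cast; ring
  rwa [he] at h

lemma gg_adj_pq1 (h5 : 5 ≤ m) (i : ZMod m) :
    (GenGrotzsch m).Adj (pV i) (qV (i + 1)) := by
  have h := gg_adj_pq (m := m) i 1 (by omega)
  have he : i + (2 * ((1 : ℕ) : ZMod m) - 1) = i + 1 := by push_cast; ring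
  rwa [he] at h

/-- coloring of the cycle part -/
def cycCol (m : ℕ) (i : ZMod m) : ℕ := if i.val = m - 1 then 2 else i.val % 2

lemma cycCol_lt (i : ZMod m) : cycCol m i < 3 := by
  unfold cycCol; split <;> omega

lemma cycCol_ne (h5 : 5 ≤ m) (i : ZMod m) : cycCol m i ≠ cycCol m (i + 1) := by
  haveI : NeZero m := ⟨by omega⟩
  haveI : Fact (1 < m) := ⟨by omega⟩
  have hv : i.val < m := ZMod.val_lt i
  have hadd : (i + 1).val = (i.val + 1) % m := by
    rw [ZMod.val_add, ZMod.val_one]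
  unfold cycCol
  rw [hadd]
  by_cases hvm : i.val = m - 1
  · have h0 : (i.val + 1) % m = 0 := by
      have hm : i.val + 1 = m := by omega
      rw [hm, Nat.mod_self]
    rw [h0, if_pos hvm, if_neg (show ¬(0 = m - 1) by omega)]
    omega
  · have h0 : (i.val + 1) % m = i.val + 1 := Nat.mod_eq_of_lt (by omega)
    rw [h0, if_neg hvm]
    split <;> omega

/-- The explicit 4-coloring. -/
def ggCol (m : ℕ) : GVert m → Fin 4
  | Sum.inl i => ⟨cycCol m i, by have := cycCol_lt (m := m) i; omega⟩
  | Sum.inr (Sum.inl _) => ⟨3, by omega⟩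
  | Sum.inr (Sum.inr _) => ⟨0, by omega⟩

lemma ggCol_valid (h5 : 5 ≤ m) : ∀ {u v : GVert m},
    (GenGrotzsch m).Adj u v → ggCol m u ≠ ggCol m v := by
  intro u v hadj
  rw [GenGrotzsch, SimpleGraph.fromRel_adj] at hadj
  obtain ⟨hne, h | h⟩ := hadj
  all_goals {
    rcases h with ⟨i, h1, h2⟩ | ⟨i, h1, h2⟩ | ⟨i, k, hk, h1, h2⟩ <;> subst h1 <;> subst h2 <;>
      simp only [ggCol, aV, pV, qV, Ne, Fin.mk.injEq]
    · omega
    · first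
        | exact cycCol_ne h5 i
        | exact fun h => cycCol_ne h5 i h.symm
    · have := cycCol_lt (m := m) i; omega
  }

lemma fin3_aux : ∀ (ca x y : Fin 3), x ≠ ca → y ≠ ca → x ≠ y →
    ((x = if ca = 0 then 1 else 0) ↔ ¬(y = if ca = 0 then 1 else 0)) := by decide

lemma gg_not_colorable3 (h5 : 5 ≤ m) (hodd : Odd m) :
    ¬ (GenGrotzsch m).Colorable 3 := by
  rintro ⟨C⟩
  set ca : Fin 3 := C (aV m) with hca
  have hq : ∀ i : ZMod m, C (qV i) ≠ ca := fun i => (C.valid (gg_adj_aq i)).symm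
  set c' : ZMod m → Fin 3 := fun i => if C (pV i) = ca then C (qV i) else C (pV i) with hc'def
  have hc'a : ∀ i, c' i ≠ ca := by
    intro i
    simp only [hc'def]
    split
    · exact hq i
    · assumption
  have hc' : ∀ i, c' i ≠ c' (i + 1) := by
    intro i
    have hpp := C.valid (gg_adj_pp h5 i)
    simp only [hc'def]
    by_cases h1 : C (pV i) = ca <;> by_cases h2 : C (pV (i + 1)) = ca
    · exact absurd (h1.trans h2.symm) hpp
    · rw [if_pos h1, if_neg h2]
      exact fun h => (C.valid (gg_adj_p1q h5 i)) (h.symm)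
    · rw [if_neg h1, if_pos h2]
      exact C.valid (gg_adj_pq1 h5 i)
    · rw [if_neg h1, if_neg h2]; exact hpp
  set w : Fin 3 := if ca = 0 then 1 else 0 with hw
  set g : ℕ → Bool := fun n => decide (c' (n : ZMod m) = w) with hg
  have hstep : ∀ n : ℕ, g (n + 1) = ! g n := by
    intro n
    have hcast : ((n + 1 : ℕ) : ZMod m) = (n : ZMod m) + 1 := by push_cast; ring
    have hiff := fin3_aux ca (c' ((n : ZMod m) + 1)) (c' (n : ZMod m))
      (hc'a _) (hc'a _) (fun h => hc' (n : ZMod m) h.symm)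
    simp only [hg, hcast, ← hw] at *
    rw [← decide_not]
    exact decide_eq_decide.mpr hiff
  have hpar : ∀ n : ℕ, g (2 * n) = g 0 := by
    intro n
    induction n with
    | zero => rfl
    | succ k ih =>
      have e1 : 2 * (k + 1) = (2 * k + 1) + 1 := by ring
      rw [e1, hstep, hstep, Bool.not_not, ih]
  obtain ⟨t, ht⟩ := hodd
  have hgm : g m = ! g 0 := by rw [ht, hstep, hpar]
  have hgm' : g m = g 0 := by
    simp only [hg, ZMod.natCast_self, Nat.cast_zero]
  rw [hgm'] at hgm
  exact (Bool.eq_not_self (g 0)).mp hgm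

end Aux

/-- For every odd integer `m ≥ 5`, the chromatic number of the generalized Grötzsch
graph `G_m` is `4`. -/
theorem genGrotzsch_chromaticNumber (m : ℕ) (h5 : 5 ≤ m) (hodd : Odd m) :
    (GenGrotzsch m).chromaticNumber = 4 := by
  have hcol : (GenGrotzsch m).Colorable 4 :=
    ⟨SimpleGraph.Coloring.mk (ggCol m) (ggCol_valid h5)⟩
  have hub : (GenGrotzsch m).chromaticNumber ≤ 4 := by
    have := hcol.chromaticNumber_le
    exact_mod_cast this
  have hnc : ¬ (GenGrotzsch m).Colorable 3 := gg_not_colorable3 h5 hodd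
  have hlb : (4 : ℕ∞) ≤ (GenGrotzsch m).chromaticNumber := by
    by_contra h
    push_neg at h
    have h3 : (GenGrotzsch m).chromaticNumber ≤ (3 : ℕ) := by
      have h4 : (GenGrotzsch m).chromaticNumber < (3 : ℕ∞) + 1 := by
        rw [show (3 : ℕ∞) + 1 = 4 by norm_num]; exact h
      have h5' := (ENat.lt_add_one_iff (by simp)).mp h4
      exact_mod_cast h5'
    rw [SimpleGraph.chromaticNumber_le_iff_colorable] at h3
    exact hnc h3
  exact le_antisymm hub hlb
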